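/- Let K be a local field of mixed characteristic (0, p), let n be a power of p, and let r | n be the number of n-th roots of unity in K*. Assume p divides r, and if p = 2 and 8 | n assume r ≠ 2. Then for every root of unity ζ ∈ K* of order exactly r, the polynomial X^{n/r} − ζ is irreducible in K[X]; consequently X^n − 1 factors over K as (X^{n/p} − 1) · ∏_ζ (X^{n/r} − ζ), where ζ ranges over the elements of K* of multiplicative order exactly r, and each factor X^{n/r} − ζ is irreducible. -/

import Mathlib

/-- A local field structure on a field `K`: a normalized (surjective) discrete
valuation `v : K* ↠ ℤ`, extended by a junk value at `0`, with respect to which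
`K` is complete. -/
structure LocalFieldStruct (K : Type) [Field K] where
  /-- the valuation; its value at `0` is irrelevant -/
  v : K → ℤ
  v_mul : ∀ x y : K, x ≠ 0 → y ≠ 0 → v (x * y) = v x + v y
  v_add : ∀ x y : K, x ≠ 0 → y ≠ 0 → x + y ≠ 0 → min (v x) (v y) ≤ v (x + y)
  v_surj : ∀ n : ℤ, ∃ x : K, x ≠ 0 ∧ v x = n
  complete : ∀ a : ℕ → K,
      (∀ N : ℤ, ∃ M : ℕ, ∀ m : ℕ, M ≤ m → ∀ n : ℕ, M ≤ n →
        a m = a n ∨ N ≤ v (a m - a n)) →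
      ∃ x : K, ∀ N : ℤ, ∃ M : ℕ, ∀ n : ℕ, M ≤ n → a n = x ∨ N ≤ v (a n - x)

namespace LocalFieldStruct

variable {K L : Type} [Field K] [Field L]

/-- `x` lies in the valuation ring `O_K`. -/
def Integral (w : LocalFieldStruct K) (x : K) : Prop :=
  x = 0 ∨ 0 ≤ w.v x

/-- The residue characteristic of `K` is the prime `p`, i.e. `p` maps to `0`
in the residue field of the valuation ring. -/
def ResidueCharP (w : LocalFieldStruct K) (p : ℕ) : Prop :=
  p.Prime ∧ ((p : K) = 0 ∨ 0 < w.v (p : K))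

/-- `K` has mixed characteristic `(0, p)`: `K` has characteristic `0` and its
residue field has characteristic `p > 0`. -/
def MixedChar (w : LocalFieldStruct K) (p : ℕ) : Prop :=
  CharZero K ∧ p.Prime ∧ 0 < w.v (p : K)

/-- `e` is the ramification index `e_{L/K}`: the valuation of `L` restricted to
`K` is `e` times the valuation of `K`. -/
def IsRamificationIndex (wK : LocalFieldStruct K) (wL : LocalFieldStruct L)
    [Algebra K L] (e : ℕ) : Prop :=
  0 < e ∧ ∀ x : K, x ≠ 0 → wL.v (algebraMap K L x) = (e : ℤ) * wK.v x

/-- `d` is the valuation `d_{L/K}` of the different of `L/K`, characterized by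
`Tr_{L/K}(𝔭_L^i) ⊆ O_K ↔ i ≥ -d` for all `i : ℤ`. -/
def IsDifferentVal (wK : LocalFieldStruct K) (wL : LocalFieldStruct L)
    [Algebra K L] (d : ℤ) : Prop :=
  ∀ i : ℤ,
    (∀ x : L, (x ≠ 0 → i ≤ wL.v x) → wK.Integral (Algebra.trace K L x)) ↔ -d ≤ i

end LocalFieldStruct

/-- `x` is a normal basis generator of `L` over `K`: the Galois conjugates of
`x` form a `K`-basis of `L`. -/
def IsNormalElement (K : Type) [Field K] {L : Type} [Field L] [Algebra K L]
    (x : L) : Prop :=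
  LinearIndependent K (fun σ : L ≃ₐ[K] L => σ x) ∧
    Submodule.span K (Set.range fun σ : L ≃ₐ[K] L => σ x) = ⊤

/-- The valuation criterion `VC(L/K)`, for an extension with ramification
index `e` and different of valuation `d`: every nonzero `x ∈ L` with
`v_L(x) ≡ -d-1 (mod e)` is a normal basis generator of `L` over `K`. -/
def VC (K : Type) [Field K] {L : Type} [Field L] [Algebra K L]
    (wL : LocalFieldStruct L) (e : ℕ) (d : ℤ) : Prop :=
  ∀ x : L, x ≠ 0 → Int.ModEq (e : ℤ) (wL.v x) (-d - 1) → IsNormalElement K x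

open Polynomial IntermediateField in
theorem aux_two_pow_irred : ∀ (m : ℕ) (K : Type) [Field K] (i : K), i ^ 2 = -1 →
    ∀ a : K, (∀ b : K, b ^ 2 ≠ a) → Irreducible (X ^ 2 ^ m - C a) := by
  intro m
  induction m with
  | zero =>
    intro K _ i hi a ha
    simpa using irreducible_X_sub_C a
  | succ m IH =>
    intro K _ i hi a ha
    rw [pow_succ]
    apply X_pow_mul_sub_C_irreducible (X_pow_sub_C_irreducible_of_prime Nat.prime_two ha)
    intro E _ _ x hx
    have hint : IsIntegral K x := not_not.mp fun h ↦ by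
      simpa only [degree_zero, degree_X_pow_sub_C Nat.prime_two.pos,
        WithBot.natCast_ne_bot] using congr_arg degree (hx.symm.trans (dif_neg h))
    apply IH K⟮x⟯ (algebraMap K K⟮x⟯ i) (by rw [← map_pow, hi, map_neg, map_one])
    intro b hb
    have hnorm : (Algebra.norm K b) ^ 2 = -a := by
      rw [← map_pow, hb, ← adjoin.powerBasis_gen hint,
        Algebra.PowerBasis.norm_gen_eq_coeff_zero_minpoly]
      simp [minpoly_gen, hx]
    exact ha (i * Algebra.norm K b) (by rw [mul_pow, hi, hnorm, neg_one_mul, neg_neg])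


open LocalFieldStruct Polynomial in
/-- Let `K` be a local field of mixed characteristic `(0, p)`, let `n` be a
power of `p`, and let `r ∣ n` be the number of `n`-th roots of unity in `K*`.
Assume `p ∣ r`, and if `p = 2` and `8 ∣ n` assume `r ≠ 2`.  Then for every
`ζ ∈ K*` of multiplicative order exactly `r`, the polynomial `X^{n/r} - ζ` is
irreducible over `K`; consequently
`X^n - 1 = (X^{n/p} - 1) · ∏_{ζ of order r} (X^{n/r} - ζ)`
is the factorization of `X^n - 1` into irreducible factors (times `X^{n/p}-1`). -/
theorem statement19 {K : Type} [Field K]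
    (wK : LocalFieldStruct K)
    (p : ℕ) (hmixed : wK.MixedChar p)
    (n : ℕ) (hn : ∃ k : ℕ, n = p ^ k)
    (r : ℕ) (hrn : r ∣ n) (hr : Nat.card {ζ : Kˣ // ζ ^ n = 1} = r)
    (hpr : p ∣ r) (h2 : p = 2 → 8 ∣ n → r ≠ 2) :
    (∀ ζ : K, orderOf ζ = r → Irreducible (X ^ (n / r) - C ζ)) ∧
      (X ^ n - 1 : Polynomial K) =
        (X ^ (n / p) - 1) *
          ∏ ζ ∈ Finset.filter (fun ζ : K => orderOf ζ = r) (nthRootsFinset r (1 : K)),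
            (X ^ (n / r) - C ζ) := by
  obtain ⟨_hchar, hp, -⟩ := hmixed
  obtain ⟨k, rfl⟩ := hn
  have hn0 : p ^ k ≠ 0 := pow_ne_zero _ hp.pos.ne'
  obtain ⟨s, hsk, rfl⟩ := (Nat.dvd_prime_pow hp).mp hrn
  have hs1 : 1 ≤ s := by
    rcases Nat.eq_zero_or_pos s with h | h
    · subst h; rw [pow_zero, Nat.dvd_one] at hpr; exact absurd hpr hp.ne_one
    · exact h
  have hrpos : 0 < p ^ s := pow_pos hp.pos s
  -- the group of n-th roots of unity has cardinality r = p ^ s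
  have hcard : Nat.card (rootsOfUnity (p ^ k) K) = p ^ s := by
    rw [← hr]
    exact Nat.card_congr (Equiv.subtypeEquivRight fun x => mem_rootsOfUnity _ x)
  haveI hfin : Finite (rootsOfUnity (p ^ k) K) :=
    Nat.finite_of_card_ne_zero (by rw [hcard]; exact hrpos.ne')
  -- every n-th root of unity is an r-th root of unity
  have lemAu : ∀ u : Kˣ, u ^ p ^ k = 1 → u ^ p ^ s = 1 := by
    intro u hu
    have h1 : (⟨u, (mem_rootsOfUnity _ _).mpr hu⟩ : rootsOfUnity (p ^ k) K) ^ p ^ s = 1 := by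
      rw [← hcard]; exact pow_card_eq_one'
    have h2 := Subtype.ext_iff.mp h1
    push_cast at h2
    exact_mod_cast h2
  have lemAK : ∀ x : K, x ^ p ^ k = 1 → x ^ p ^ s = 1 := by
    intro x hx
    have hxu : IsUnit x := IsUnit.of_pow_eq_one hx hn0
    have hu : hxu.unit ^ p ^ k = 1 := by
      ext
      push_cast [IsUnit.unit_spec]
      exact hx
    have := congrArg Units.val (lemAu _ hu)
    push_cast [IsUnit.unit_spec] at this
    exact this
  -- a generator
  obtain ⟨g, hgord⟩ := IsCyclic.exists_ofOrder_eq_natCard (α := rootsOfUnity (p ^ k) K)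
  have hgK : orderOf ((g : Kˣ) : K) = p ^ s := by
    rw [orderOf_units,
      show (g : Kˣ) = (rootsOfUnity (p ^ k) K).subtype g from rfl,
      orderOf_injective _ (Subgroup.subtype_injective _), hgord, hcard]
  have hprim : IsPrimitiveRoot ((g : Kˣ) : K) (p ^ s) := hgK ▸ IsPrimitiveRoot.orderOf _
  -- irreducibility
  have hdiv : p ^ k / p ^ s = p ^ (k - s) := Nat.pow_div hsk hp.pos
  have irr : ∀ ζ : K, orderOf ζ = p ^ s → Irreducible (X ^ (p ^ k / p ^ s) - C ζ) := by
    intro ζ hζ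
    rw [hdiv]
    have key : s < k → ∀ b : K, b ^ p ≠ ζ := by
      intro hsk' b hb
      have hb1 : b ^ p ^ (s + 1) = 1 := by
        rw [pow_succ', pow_mul, hb, ← hζ, pow_orderOf_eq_one]
      have hb2 : b ^ p ^ k = 1 := by
        obtain ⟨c, hc⟩ := pow_dvd_pow p hsk'
        rw [hc, pow_mul, hb1, one_pow]
      have hb3 : b ^ p ^ s = 1 := lemAK b hb2
      have hz1 : ζ ^ p ^ (s - 1) = 1 := by
        rw [← hb, ← pow_mul, ← pow_succ', Nat.sub_add_cancel hs1, hb3]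
      have hdvd : p ^ s ∣ p ^ (s - 1) := hζ ▸ orderOf_dvd_of_pow_eq_one hz1
      have := (Nat.pow_dvd_pow_iff_le_right hp.one_lt).mp hdvd
      omega
    rcases Nat.lt_or_ge s k with hlt | hge
    · have key' := key hlt
      rcases eq_or_ne p 2 with hp2 | hp2
      · subst hp2
        rcases Nat.lt_or_ge s 2 with hs2 | hs2
        · -- s = 1, hence k = 2
          have hs : s = 1 := by omega
          have h8 : ¬ (8 ∣ 2 ^ k) := fun h8 => h2 rfl h8 (by rw [hs, pow_one])
          have hk3 : ¬ (3 ≤ k) := fun h3 => h8 (by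
            have : (2:ℕ) ^ 3 ∣ 2 ^ k := pow_dvd_pow 2 h3
            simpa using this)
          have hk : k = 2 := by omega
          subst hk hs
          norm_num
          exact X_pow_sub_C_irreducible_of_prime Nat.prime_two key'
        · -- s ≥ 2 : K contains i
          set i : K := ((g : Kˣ) : K) ^ 2 ^ (s - 2) with hidef
          have hi : i ^ 2 = -1 := by
            have hsq : i ^ 2 = ((g : Kˣ) : K) ^ 2 ^ (s - 1) := by
              rw [hidef, ← pow_mul, ← pow_succ]
              congr 2
              omega
            have h1 : (i ^ 2) ^ 2 = 1 := by
              rw [hsq, ← pow_mul, ← pow_succ]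
              have : s - 1 + 1 = s := by omega
              rw [this, ← hgK, pow_orderOf_eq_one]
            have hne : i ^ 2 ≠ 1 := by
              rw [hsq]
              intro h
              have := orderOf_dvd_of_pow_eq_one h
              rw [hgK] at this
              have := (Nat.pow_dvd_pow_iff_le_right (by norm_num : (1:ℕ) < 2)).mp this
              omega
            rcases sq_eq_one_iff.mp h1 with h | h
            · exact absurd h hne
            · exact h
          exact aux_two_pow_irred (k - s) K i hi ζ key'
      · exact X_pow_sub_C_irreducible_of_prime_pow hp hp2 _ key'
    · have hks : k - s = 0 := Nat.sub_eq_zero_of_le hge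
      rw [hks, pow_zero, pow_one]
      exact irreducible_X_sub_C ζ
  refine ⟨irr, ?_⟩
  -- factorization
  have hm_mul : p ^ k / p ^ s * p ^ s = p ^ k := Nat.div_mul_cancel hrn
  have stepA : (X ^ p ^ s - 1 : K[X]) = ∏ ζ ∈ nthRootsFinset (p ^ s) (1 : K), (X - C ζ) :=
    X_pow_sub_one_eq_prod hrpos hprim
  have hprim' : IsPrimitiveRoot (((g : Kˣ) : K) ^ p) (p ^ (s - 1)) :=
    hprim.pow hrpos (by rw [← pow_succ', Nat.sub_add_cancel hs1])
  have stepC : (X ^ p ^ (s - 1) - 1 : K[X]) = ∏ ζ ∈ nthRootsFinset (p ^ (s - 1)) (1 : K), (X - C ζ) :=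
    X_pow_sub_one_eq_prod (pow_pos hp.pos _) hprim'
  have compprod : ∀ (j : ℕ), ((X ^ j - 1 : K[X]) = ∏ ζ ∈ nthRootsFinset j (1 : K), (X - C ζ)) →
      (X ^ (p ^ k / p ^ s * j) - 1 : K[X]) =
        ∏ ζ ∈ nthRootsFinset j (1 : K), (X ^ (p ^ k / p ^ s) - C ζ) := by
    intro j hj
    have h0 := congrArg (aeval ((X : K[X]) ^ (p ^ k / p ^ s))) hj
    simp only [map_sub, map_pow, map_one, aeval_X, map_prod, aeval_C,
      Polynomial.algebraMap_eq, ← pow_mul] at h0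
    exact h0
  have e1 : (X ^ p ^ k - 1 : K[X]) =
      ∏ ζ ∈ nthRootsFinset (p ^ s) (1 : K), (X ^ (p ^ k / p ^ s) - C ζ) := by
    have := compprod _ stepA
    rwa [hm_mul] at this
  have hnp : p ^ k / p = p ^ k / p ^ s * p ^ (s - 1) := by
    have h1 : p ^ k = p ^ k / p ^ s * p ^ (s - 1) * p := by
      rw [mul_assoc, ← pow_succ, Nat.sub_add_cancel hs1, hm_mul]
    conv_lhs => rw [h1]
    rw [Nat.mul_div_cancel _ hp.pos]
  have e2 : (X ^ (p ^ k / p) - 1 : K[X]) =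
      ∏ ζ ∈ nthRootsFinset (p ^ (s - 1)) (1 : K), (X ^ (p ^ k / p ^ s) - C ζ) := by
    rw [hnp]
    exact compprod _ stepC
  have hfil : Finset.filter (fun ζ : K => ¬ orderOf ζ = p ^ s) (nthRootsFinset (p ^ s) (1 : K)) =
      nthRootsFinset (p ^ (s - 1)) (1 : K) := by
    ext x
    simp only [Finset.mem_filter, mem_nthRootsFinset hrpos,
      mem_nthRootsFinset (pow_pos hp.pos (s - 1))]
    constructor
    · rintro ⟨hx, hne⟩
      obtain ⟨j, hj, hjx⟩ := (Nat.dvd_prime_pow hp).mp (orderOf_dvd_of_pow_eq_one hx)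
      have hjs : j ≤ s - 1 := by
        rcases Nat.lt_or_ge j s with h | h
        · omega
        · exfalso; apply hne; rw [hjx]; congr 1; omega
      have : orderOf x ∣ p ^ (s - 1) := hjx ▸ pow_dvd_pow p hjs
      exact orderOf_dvd_iff_pow_eq_one.mp this
    · intro hx
      have hdvd : orderOf x ∣ p ^ (s - 1) := orderOf_dvd_of_pow_eq_one hx
      constructor
      · have : x ^ (p ^ (s - 1) * p) = 1 := by rw [pow_mul, hx, one_pow]
        rw [← pow_succ, Nat.sub_add_cancel hs1] at this
        exact this
      · intro ho
        rw [ho] at hdvd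
        have := (Nat.pow_dvd_pow_iff_le_right hp.one_lt).mp hdvd
        omega
  calc (X ^ p ^ k - 1 : K[X])
      = ∏ ζ ∈ nthRootsFinset (p ^ s) (1 : K), (X ^ (p ^ k / p ^ s) - C ζ) := e1
    _ = (∏ ζ ∈ Finset.filter (fun ζ : K => orderOf ζ = p ^ s) (nthRootsFinset (p ^ s) (1 : K)),
          (X ^ (p ^ k / p ^ s) - C ζ)) *
        ∏ ζ ∈ Finset.filter (fun ζ : K => ¬ orderOf ζ = p ^ s) (nthRootsFinset (p ^ s) (1 : K)),
          (X ^ (p ^ k / p ^ s) - C ζ) :=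
        (Finset.prod_filter_mul_prod_filter_not _ _ _).symm
    _ = (X ^ (p ^ k / p) - 1) *
          ∏ ζ ∈ Finset.filter (fun ζ : K => orderOf ζ = p ^ s) (nthRootsFinset (p ^ s) (1 : K)),
            (X ^ (p ^ k / p ^ s) - C ζ) := by
        rw [hfil, ← e2, mul_comm]
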